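/- Let G = (V,E) be an Eulerian multigraph with a nice tree decomposition, and let i be an introduce node with single child i', where X(i) = X(i') ∪ {w} for some w ∉ X(i'). Then G_ℓ(i) = G_ℓ(i'), L(i) = L(i'), C_ℓ(i) = {c.0 : c ∈ C_ℓ(i')} (appending charge 0 for w), S(i) = {s.w : s ∈ S(i')} (appending s_w = w), and for every c ∈ C_ℓ(i') and s ∈ S(i'): ψ(i, c.0, s.w) = ψ(i', c, s). -/

import Mathlib

/-- An undirected multigraph on vertex set `V` with edge set `E`:
each edge is assigned an unordered pair of endpoints. -/
structure Multigraph (V : Type) (E : Type) where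
  ends : E → Sym2 V

namespace Multigraph

variable {V E : Type} [Fintype V] [Fintype E] [DecidableEq V] [DecidableEq E]

/-- The multiplicity of a vertex in an unordered pair (2 for a loop). -/
def endMult (v : V) : Sym2 V → ℕ :=
  Sym2.lift ⟨fun a b => (if a = v then 1 else 0) + (if b = v then 1 else 0),
    by intro a b; exact add_comm _ _⟩

/-- The degree of `v` counting only edges in `S` (loops count twice). -/
noncomputable def degOn (G : Multigraph V E) (S : Set E) (v : V) : ℕ :=
  ∑ e ∈ (Set.toFinite S).toFinset, endMult v (G.ends e)

/-- The degree of a vertex (loops count twice). -/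
noncomputable def degree (G : Multigraph V E) (v : V) : ℕ :=
  G.degOn Set.univ v

/-- Two vertices are adjacent if some edge has them as its endpoints. -/
def Adj (G : Multigraph V E) (u v : V) : Prop := ∃ e, G.ends e = s(u, v)

/-- A multigraph is connected if any two vertices are joined by a walk. -/
def Connected (G : Multigraph V E) : Prop := ∀ u v, Relation.ReflTransGen G.Adj u v

/-- A multigraph is Eulerian if it is connected and every degree is even. -/
def IsEulerianGraph (G : Multigraph V E) : Prop :=
  G.Connected ∧ ∀ v, Even (G.degree v)

/-- An orientation of (all edges of) `G`: each edge gets a direction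
compatible with its endpoints. -/
structure Orientation (G : Multigraph V E) where
  dir : E → V × V
  compat : ∀ e, G.ends e = s((dir e).1, (dir e).2)

/-- Out-degree of `v`, counting only edges in `P`. -/
noncomputable def Orientation.outOn {G : Multigraph V E} (o : G.Orientation) (P : Set E) (v : V) : ℕ :=
  Nat.card {e : E | e ∈ P ∧ (o.dir e).1 = v}

/-- In-degree of `v`, counting only edges in `P`. -/
noncomputable def Orientation.inOn {G : Multigraph V E} (o : G.Orientation) (P : Set E) (v : V) : ℕ :=
  Nat.card {e : E | e ∈ P ∧ (o.dir e).2 = v}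

/-- An orientation is Eulerian if every vertex has in-degree equal to out-degree. -/
def Orientation.IsEulerian {G : Multigraph V E} (o : G.Orientation) : Prop :=
  ∀ v, o.outOn Set.univ v = o.inOn Set.univ v

/-- An Euler tour of `G`: a cyclic arrangement of all edges, each given a
direction, such that the head of each arc is the tail of the next. -/
structure EulerTour (G : Multigraph V E) where
  dir : E → V × V
  compat : ∀ e, G.ends e = s((dir e).1, (dir e).2)
  seq : ZMod (Fintype.card E) ≃ E
  link : ∀ i, (dir (seq i)).2 = (dir (seq (i + 1))).1

/-- Two Euler tours are identified when one is a cyclic permutation of the other. -/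
def EulerTour.CyclicEquiv {G : Multigraph V E} (T T' : G.EulerTour) : Prop :=
  T.dir = T'.dir ∧ ∃ k, ∀ i, T'.seq i = T.seq (i + k)

/-- The number of Euler tours of `G`, up to cyclic permutation. -/
noncomputable def numEulerTours (G : Multigraph V E) : ℕ :=
  Nat.card (Quot (EulerTour.CyclicEquiv (G := G)))

end Multigraph

/-- A tree decomposition of the multigraph `G`: a tree `T` on node set `I`
with bags `X i ⊆ V` covering all vertices and all edges, such that for each
vertex the set of nodes whose bag contains it induces a subtree of `T`. -/
structure TreeDecomp {V E : Type} (G : Multigraph V E) (I : Type) (T : SimpleGraph I) where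
  isTree : T.IsTree
  X : I → Set V
  vertexCover : ∀ v : V, ∃ i, v ∈ X i
  edgeCover : ∀ e : E, ∃ i, ∀ v ∈ G.ends e, v ∈ X i
  coherent : ∀ v : V, (T.induce {i | v ∈ X i}).Connected

/-- `j` lies in the subtree rooted at `i` of the tree `T` rooted at `ρ`:
every walk from the root `ρ` to `j` passes through `i`. -/
def Descends {I : Type} (T : SimpleGraph I) (ρ i j : I) : Prop :=
  ∀ p : T.Walk ρ j, i ∈ p.support

namespace TreeDecomp

variable {V E I : Type} [Fintype V] [Fintype E] [DecidableEq V] [DecidableEq E]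
  {G : Multigraph V E} {T : SimpleGraph I}

/-- `V(i)`: all vertices appearing in bags of the subtree rooted at `i`. -/
def Vset (td : TreeDecomp G I T) (ρ i : I) : Set V :=
  {v | ∃ j, Descends T ρ i j ∧ v ∈ td.X j}

/-- `E(i)`: edges with both endpoints in the bag `X i`. -/
def Eset (td : TreeDecomp G I T) (i : I) : Set E :=
  {e | ∀ v ∈ G.ends e, v ∈ td.X i}

/-- `E_ℓ(i)`: edges with both endpoints in `V(i)`, not both in `X i`. -/
def Elset (td : TreeDecomp G I T) (ρ i : I) : Set E :=
  {e | (∀ v ∈ G.ends e, v ∈ td.Vset ρ i) ∧ ¬ ∀ v ∈ G.ends e, v ∈ td.X i}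

/-- `L(i)`: bag vertices which are endpoints of some edge of `E_ℓ(i)`. -/
def Lset (td : TreeDecomp G I T) (ρ i : I) : Set V :=
  {x ∈ td.X i | ∃ e ∈ td.Elset ρ i, x ∈ G.ends e}

/-- `U(i) = X(i) \ L(i)`. -/
def Uset (td : TreeDecomp G I T) (ρ i : I) : Set V :=
  td.X i \ td.Lset ρ i

end TreeDecomp

namespace Multigraph

variable {V E : Type} [Fintype V] [Fintype E] [DecidableEq V] [DecidableEq E]

/-- An orientation of the edges in the set `S`: each edge of `S` gets a
direction compatible with its endpoints. -/
structure OrientationOn (G : Multigraph V E) (S : Set E) where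
  dir : {e : E // e ∈ S} → V × V
  compat : ∀ e, G.ends e.1 = s((dir e).1, (dir e).2)

namespace OrientationOn

variable {G : Multigraph V E} {S : Set E}

/-- Out-degree of `v` under `σ`, counting only edges in `P`. -/
noncomputable def outOn (σ : OrientationOn G S) (P : Set E) (v : V) : ℕ :=
  Nat.card {e : {e : E // e ∈ S} | e.1 ∈ P ∧ (σ.dir e).1 = v}

/-- In-degree of `v` under `σ`, counting only edges in `P`. -/
noncomputable def inOn (σ : OrientationOn G S) (P : Set E) (v : V) : ℕ :=
  Nat.card {e : {e : E // e ∈ S} | e.1 ∈ P ∧ (σ.dir e).2 = v}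

/-- The charge of `v` under `σ` (out-degree minus in-degree), counting only
edges in `P`. -/
noncomputable def chargeOn (σ : OrientationOn G S) (P : Set E) (v : V) : ℤ :=
  (σ.outOn P v : ℤ) - (σ.inOn P v : ℤ)

/-- The charge vector of `σ` (out-degree minus in-degree at each vertex). -/
noncomputable def charge (σ : OrientationOn G S) (v : V) : ℤ :=
  σ.chargeOn Set.univ v

/-- `v` has an outgoing arc in the arc set `F` of `σ`. -/
def arcOut (σ : OrientationOn G S) (F : Set {e : E // e ∈ S}) (v : V) : Prop :=
  ∃ e ∈ F, (σ.dir e).1 = v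

/-- The arc relation of the arc set `F` of `σ`. -/
def arcRel (σ : OrientationOn G S) (F : Set {e : E // e ∈ S}) (u v : V) : Prop :=
  ∃ e ∈ F, σ.dir e = (u, v)

/-- `F` is an in-directed forest: every vertex has at most one outgoing arc,
and there is no directed cycle. -/
def IsInForest (σ : OrientationOn G S) (F : Set {e : E // e ∈ S}) : Prop :=
  (∀ v : V, {e | e ∈ F ∧ (σ.dir e).1 = v}.Subsingleton) ∧
  (∀ v : V, ¬ Relation.TransGen (σ.arcRel F) v v)

/-- The root set of the forest `F` relative to the vertex set `Ls`:
the vertices of `Ls` with no outgoing arc in `F`. -/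
def forRoots (σ : OrientationOn G S) (F : Set {e : E // e ∈ S}) (Ls : Set V) : Set V :=
  {v ∈ Ls | ¬ σ.arcOut F v}

/-- `F` is a forest in the sense of `FOR`: an in-directed forest of arcs of `σ`
whose roots are contained in `Ls` and in which every vertex of
`internal ∪ (Ls \ R(F))` has an outgoing arc. -/
def MemFOR (σ : OrientationOn G S) (F : Set {e : E // e ∈ S})
    (internal Ls : Set V) : Prop :=
  σ.IsInForest F ∧
  (∀ v : V, (∃ e ∈ F, v ∈ G.ends e.1) → ¬ σ.arcOut F v → v ∈ Ls) ∧
  (∀ v ∈ internal ∪ (Ls \ σ.forRoots F Ls), σ.arcOut F v)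

/-- `s` is the root vector of the forest `F`: it assigns to each `x ∈ Ls` the
root of the tree of `F` containing `x`, and fixes every other vertex. -/
def IsRootVec (σ : OrientationOn G S) (F : Set {e : E // e ∈ S})
    (Ls : Set V) (s : V → V) : Prop :=
  (∀ x, x ∉ Ls → s x = x) ∧
  (∀ x ∈ Ls, s x ∈ σ.forRoots F Ls ∧ Relation.ReflTransGen (σ.arcRel F) x (s x))

end OrientationOn

end Multigraph

namespace TreeDecomp

open Multigraph

variable {V E I : Type} [Fintype V] [Fintype E] [DecidableEq V] [DecidableEq E]
  {G : Multigraph V E} {T : SimpleGraph I}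

/-- `σ ∈ D_ℓ(i)`: an orientation of the edges of `G_ℓ(i)` which is Eulerian
(in-degree equals out-degree) at every vertex of `V(i) \ X(i)`. -/
def MemDl (td : TreeDecomp G I T) (ρ i : I)
    (σ : OrientationOn G (td.Elset ρ i)) : Prop :=
  ∀ v ∈ td.Vset ρ i \ td.X i, σ.outOn Set.univ v = σ.inOn Set.univ v

/-- `C_ℓ(i)`: the set of charge vectors of orientations in `D_ℓ(i)`. -/
def Cl (td : TreeDecomp G I T) (ρ i : I) : Set (V → ℤ) :=
  {c | ∃ σ : OrientationOn G (td.Elset ρ i), td.MemDl ρ i σ ∧ c = σ.charge}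

/-- `S(i)`: the set of root vectors for node `i` (extended by the identity off
`L(i)`): `s_x = x` off `L(i)`, at least one `x ∈ L(i)` has `s_x = x`, and,
with `R(s) = {x ∈ L(i) : s_x = x}`, every `y ∈ L(i) \ R(s)` has `s_y ∈ R(s)`. -/
def RootVectors (td : TreeDecomp G I T) (ρ i : I) : Set (V → V) :=
  {s | (∀ x, x ∉ td.Lset ρ i → s x = x) ∧
       (∃ x ∈ td.Lset ρ i, s x = x) ∧
       (∀ y ∈ td.Lset ρ i, s y ≠ y → (s y ∈ td.Lset ρ i ∧ s (s y) = s y))}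

/-- `ψ(i, c, s)`: the number of pairs `(𝓓, 𝓕)` with `𝓓 ∈ D_ℓ(i)`,
`𝓕 ∈ FOR(𝓓)`, whose charge vector is `c` and whose root vector is `s`. -/
noncomputable def psi (td : TreeDecomp G I T) (ρ i : I) (c : V → ℤ) (s : V → V) : ℕ :=
  Nat.card {p : OrientationOn G (td.Elset ρ i) × Set {e : E // e ∈ td.Elset ρ i} //
    td.MemDl ρ i p.1 ∧
    p.1.MemFOR p.2 (td.Vset ρ i \ td.X i) (td.Lset ρ i) ∧
    p.1.charge = c ∧
    p.1.IsRootVec p.2 (td.Lset ρ i) s}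

end TreeDecomp

open Multigraph TreeDecomp

section AuxLemmas

open SimpleGraph

variable {I : Type} {T : SimpleGraph I}

/-- Transitivity: anything descending from `i'` descends from `i` when `i'` descends from `i`. -/
lemma descends_of_descends [DecidableEq I] {ρ i i' : I} (hd : Descends T ρ i i') :
    ∀ j, Descends T ρ i' j → Descends T ρ i j := by
  intro j hj p
  have h1 := hj p
  have h2 := hd (p.takeUntil i' h1)
  exact SimpleGraph.Walk.support_takeUntil_subset _ h1 h2

/-- Splitting off the first step of a nontrivial path. -/
lemma path_first_step {i j : I} (D : T.Walk i j) (hD : D.IsPath) (hne : j ≠ i) :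
    ∃ (k : I) (D' : T.Walk k j), T.Adj i k ∧ i ∉ D'.support ∧
      ∀ x ∈ k :: D'.support, x ∈ D.support := by
  cases D with
  | nil => exact absurd rfl hne
  | cons h D' =>
    rw [SimpleGraph.Walk.cons_isPath_iff] at hD
    refine ⟨_, D', h, hD.2, fun x hx => ?_⟩
    rw [SimpleGraph.Walk.support_cons]
    rcases List.mem_cons.mp hx with hx | hx
    · exact List.mem_cons_of_mem _ (hx ▸ D'.start_mem_support)
    · exact List.mem_cons_of_mem _ hx

/-- If `i'` is the only child of `i`, every proper descendant of `i` descends from `i'`. -/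
lemma descends_step [DecidableEq I] {ρ i i' : I}
    (honly : ∀ j, T.Adj i j → Descends T ρ i j → j = i') :
    ∀ j, Descends T ρ i j → j ≠ i → Descends T ρ i' j := by
  intro j hj hne p
  set P : T.Walk ρ j := (p.toPath : T.Walk ρ j) with hP
  have hPpath : P.IsPath := p.toPath.2
  have hiP : i ∈ P.support := hj P
  have hDpath : (P.dropUntil i hiP).IsPath := hPpath.dropUntil hiP
  obtain ⟨k, D', hadj, hiD', hsub⟩ := path_first_step (P.dropUntil i hiP) hDpath hne
  have hdk : Descends T ρ i k := by
    intro q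
    have := hj (q.append D')
    rw [SimpleGraph.Walk.mem_support_append_iff] at this
    rcases this with h | h
    · exact h
    · exact absurd h hiD'
  have hk : k = i' := honly k hadj hdk
  subst hk
  have : k ∈ P.support :=
    SimpleGraph.Walk.support_dropUntil_subset _ hiP (hsub _ List.mem_cons_self)
  exact SimpleGraph.Walk.support_toPath_subset p this

/-- A node does not descend from its own child. -/
lemma not_descends_parent [DecidableEq I] {ρ i i' : I}
    (hreach : T.Reachable ρ i) (hd : Descends T ρ i i') (hne : i' ≠ i) :
    ¬ Descends T ρ i' i := by
  obtain ⟨p⟩ := hreach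
  intro hdesc
  set P : T.Walk ρ i := (p.toPath : T.Walk ρ i) with hP
  have hPpath : P.IsPath := p.toPath.2
  have hiP : i' ∈ P.support := hdesc P
  have hi : i ∈ (P.takeUntil i' hiP).support := hd (P.takeUntil i' hiP)
  have hnodup : P.support.Nodup := hPpath.support_nodup
  rw [← SimpleGraph.Walk.take_spec P hiP, SimpleGraph.Walk.support_append] at hnodup
  have hdisj := (List.nodup_append'.mp hnodup).2.2
  have hi2 : i ∈ (P.dropUntil i' hiP).support.tail := by
    have hend : i ∈ (P.dropUntil i' hiP).support := SimpleGraph.Walk.end_mem_support _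
    rw [SimpleGraph.Walk.support_eq_cons] at hend
    rcases List.mem_cons.mp hend with h | h
    · exact absurd h.symm hne
    · exact h
  exact hdisj hi hi2

end AuxLemmas

section SepLemma

open Multigraph SimpleGraph

variable {V E I : Type} [Fintype V] [Fintype E] [DecidableEq V] [DecidableEq E]
  {G : Multigraph V E} {T : SimpleGraph I}

/-- The bag `X i'` separates the subtree of `i'` from the rest. -/
lemma bag_separates (td : TreeDecomp G I T) {ρ i' j₀ j₁ : I}
    (h0 : ¬ Descends T ρ i' j₀) (h1 : Descends T ρ i' j₁)
    (v : V) (hv0 : v ∈ td.X j₀) (hv1 : v ∈ td.X j₁) : v ∈ td.X i' := by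
  rw [Descends] at h0
  push_neg at h0
  obtain ⟨p, hp⟩ := h0
  have hcoh := (td.coherent v).preconnected ⟨j₀, hv0⟩ ⟨j₁, hv1⟩
  obtain ⟨q'⟩ := hcoh
  let q : T.Walk j₀ j₁ := q'.map (SimpleGraph.Embedding.induce {n | v ∈ td.X n}).toHom
  have h2 := h1 (p.append q)
  rw [SimpleGraph.Walk.mem_support_append_iff] at h2
  rcases h2 with h | h
  · exact absurd h hp
  · rw [show q.support = _ from SimpleGraph.Walk.support_map _ _, List.mem_map] at h
    obtain ⟨⟨x, hx⟩, _, hxe⟩ := h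
    rwa [show x = i' from hxe] at hx

end SepLemma

/-- **introduce node.** If `i` is an introduce node with single
child `i'`, `X(i) = X(i') ∪ {w}` with `w ∉ X(i')`, then `G_ℓ(i) = G_ℓ(i')`,
`L(i) = L(i')`, the charge vectors and root vectors coincide (the appended
entries for `w` being `0` and `w` respectively, which in this encoding of
vectors as total functions is automatic), and `ψ(i, c, s) = ψ(i', c, s)` for
all `c ∈ C_ℓ(i')` and `s ∈ S(i')`. -/
theorem psi_introduce_node
    {V E I : Type} [Fintype V] [Fintype E] [DecidableEq V] [DecidableEq E]
    (G : Multigraph V E) (hG : G.IsEulerianGraph)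
    (T : SimpleGraph I) (td : TreeDecomp G I T) (ρ i i' : I)
    (hchild : T.Adj i i' ∧ Descends T ρ i i')
    (honly : ∀ j, T.Adj i j → Descends T ρ i j → j = i')
    (w : V) (hw : w ∉ td.X i') (hX : td.X i = td.X i' ∪ {w}) :
    td.Elset ρ i = td.Elset ρ i' ∧
    td.Lset ρ i = td.Lset ρ i' ∧
    td.Cl ρ i = td.Cl ρ i' ∧
    td.RootVectors ρ i = td.RootVectors ρ i' ∧
    (∀ c ∈ td.Cl ρ i', ∀ s ∈ td.RootVectors ρ i',
      td.psi ρ i c s = td.psi ρ i' c s) := by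
  classical
  have hreach : T.Reachable ρ i := td.isTree.isConnected.preconnected ρ i
  have hadj := hchild.1
  have hdii' := hchild.2
  have hne : i' ≠ i := hadj.ne'
  have hnd : ¬ Descends T ρ i' i := not_descends_parent hreach hdii' hne
  -- w is not in V(i')
  have hwV : w ∉ td.Vset ρ i' := by
    rintro ⟨j, hdj, hwj⟩
    exact hw (bag_separates td hnd hdj w (by rw [hX]; exact Set.mem_union_right _ rfl) hwj)
  -- X i' ⊆ Vset ρ i'
  have hXV' : td.X i' ⊆ td.Vset ρ i' :=
    fun v hv => ⟨i', fun p => p.end_mem_support, hv⟩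
  -- Vset decomposition
  have hVset : td.Vset ρ i = td.Vset ρ i' ∪ {w} := by
    ext v
    constructor
    · rintro ⟨j, hdj, hvj⟩
      by_cases hji : j = i
      · subst hji
        rw [hX] at hvj
        rcases hvj with hv | hv
        · exact Or.inl (hXV' hv)
        · exact Or.inr hv
      · exact Or.inl ⟨j, descends_step honly j hdj hji, hvj⟩
    · rintro (⟨j, hdj, hvj⟩ | hv)
      · exact ⟨j, descends_of_descends hdii' j hdj, hvj⟩
      · exact ⟨i, fun p => p.end_mem_support, by rw [hX]; exact Set.mem_union_right _ hv⟩
  have hVX : td.Vset ρ i \ td.X i = td.Vset ρ i' \ td.X i' := by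
    ext v
    simp only [Set.mem_diff, hVset, hX, Set.mem_union, Set.mem_singleton_iff]
    constructor
    · rintro ⟨hv1, hv2⟩
      push_neg at hv2
      rcases hv1 with hv | hv
      · exact ⟨hv, hv2.1⟩
      · exact absurd hv hv2.2
    · rintro ⟨hv1, hv2⟩
      have hvw : v ≠ w := fun h => hwV (h ▸ hv1)
      exact ⟨Or.inl hv1, by push_neg; exact ⟨hv2, hvw⟩⟩
  -- key: endpoints of edges of Elset ρ i lie in Vset ρ i'
  have hE : td.Elset ρ i = td.Elset ρ i' := by
    ext e
    constructor
    · rintro ⟨he1, he2⟩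
      have hends : ∀ v ∈ G.ends e, v ∈ td.Vset ρ i' := by
        by_contra hcon
        push_neg at hcon
        obtain ⟨a, ha, haV⟩ := hcon
        have haw : a = w := by
          have := he1 a ha
          rw [hVset] at this
          rcases this with h | h
          · exact absurd h haV
          · exact h
        rw [haw] at ha
        -- every endpoint is in X i, contradicting he2
        apply he2
        intro v hv
        rw [hX]
        by_cases hvw : v = w
        · exact Or.inr hvw
        · -- v ∈ Vset ρ i' (since v ≠ w), and v shares a bag with w
          have hvV : v ∈ td.Vset ρ i' := by
            have := he1 v hv
            rw [hVset] at this
            rcases this with h | h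
            · exact h
            · exact absurd h hvw
          obtain ⟨j₁, hdj₁, hvj₁⟩ := hvV
          obtain ⟨j₀, hj₀⟩ := td.edgeCover e
          have hndj₀ : ¬ Descends T ρ i' j₀ := fun hd => hwV ⟨j₀, hd, hj₀ w ha⟩
          exact Or.inl (bag_separates td hndj₀ hdj₁ v (hj₀ v hv) hvj₁)
      refine ⟨hends, fun hall => he2 ?_⟩
      intro v hv
      rw [hX]
      exact Or.inl (hall v hv)
    · rintro ⟨he1, he2⟩
      refine ⟨fun v hv => by rw [hVset]; exact Or.inl (he1 v hv), fun hall => he2 ?_⟩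
      intro v hv
      have := hall v hv
      rw [hX] at this
      rcases this with h | h
      · exact h
      · exact absurd (h ▸ he1 v hv) hwV
  have hL : td.Lset ρ i = td.Lset ρ i' := by
    ext x
    unfold TreeDecomp.Lset
    rw [hE]
    simp only [Set.mem_setOf_eq, hX, Set.mem_union, Set.mem_singleton_iff]
    constructor
    · rintro ⟨hx1, e, he, hxe⟩
      rcases hx1 with h | h
      · exact ⟨h, e, he, hxe⟩
      · exact absurd (h ▸ he.1 x hxe) hwV
    · rintro ⟨hx1, hx2⟩
      exact ⟨Or.inl hx1, hx2⟩
  have hCl : td.Cl ρ i = td.Cl ρ i' := by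
    unfold TreeDecomp.Cl TreeDecomp.MemDl
    rw [hE, hVX]
  have hRV : td.RootVectors ρ i = td.RootVectors ρ i' := by
    unfold TreeDecomp.RootVectors
    rw [hL]
  refine ⟨hE, hL, hCl, hRV, fun c _ s _ => ?_⟩
  unfold TreeDecomp.psi TreeDecomp.MemDl
  rw [hE, hVX, hL]
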